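/- Let f, g ∈ ℚ[x,y] be a zero-dimensional system such that the resultant R(x) = res_y(f,g) is squarefree (with content 1) and the leading coefficients of f and g with respect to y have no common factor. Then the system {f, g} is in generic position with respect to y: for every α ∈ ℂ with R(α) = 0, the polynomials f(α,y) and g(α,y) have exactly one common zero in ℂ. -/

import Mathlib

open Polynomial

/-- The Sylvester matrix of `f` and `g`, regarded as polynomials of degree
`m` and `n` respectively: the first `n` rows hold shifted coefficient vectors
of `f`, the last `m` rows shifted coefficient vectors of `g`. -/
def sylvesterMatrix {R : Type*} [CommRing R] (f g : Polynomial R) (m n : ℕ) :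
    Matrix (Fin (n + m)) (Fin (n + m)) R :=
  Matrix.of fun i j =>
    if (i : ℕ) < n then
      (if (i : ℕ) ≤ (j : ℕ) ∧ (j : ℕ) ≤ (i : ℕ) + m then f.coeff (m + i - j) else 0)
    else
      (if (i : ℕ) - n ≤ (j : ℕ) ∧ (j : ℕ) ≤ ((i : ℕ) - n) + n
        then g.coeff (n + ((i : ℕ) - n) - j) else 0)

/-- The resultant of `f` and `g` (w.r.t. their main variable), as the
determinant of the Sylvester matrix. -/
noncomputable def resultant {R : Type*} [CommRing R] (f g : Polynomial R) : R :=
  (sylvesterMatrix f g f.natDegree g.natDegree).det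

/-- `f(α, y)`: specialize the inner variable `x` of `f ∈ R[x][y]` at `α`. -/
noncomputable def specializeX (α : ℂ) (f : Polynomial (Polynomial ℚ)) : Polynomial ℂ :=
  f.map (Polynomial.aeval α).toRingHom

namespace SylAux

open Finset

/-- Generic row-sum computation. -/
lemma L0 (K : ℕ) (P : Polynomial ℂ) (d a : ℕ) (hP : P.natDegree ≤ d) (had : a + d < K) :
    (∑ j ∈ Finset.range K,
      if a ≤ j ∧ j ≤ a + d then C (P.coeff (d + a - j)) * X ^ (K - 1 - j) else 0)
      = X ^ (K - 1 - (a + d)) * P := by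
  have h1 : ∀ j ∈ Finset.range K,
      (if a ≤ j ∧ j ≤ a + d then C (P.coeff (d + a - j)) * X ^ (K - 1 - j) else 0)
      = if j ∈ Finset.Icc a (a + d) then C (P.coeff (d + a - j)) * X ^ (K - 1 - j) else 0 := by
    intro j _; simp [Finset.mem_Icc]
  have hsub : Finset.Icc a (a + d) ⊆ Finset.range K := by
    intro j hj
    simp only [Finset.mem_Icc] at hj
    simp only [Finset.mem_range]
    omega
  rw [Finset.sum_congr rfl h1, Finset.sum_ite_mem, Finset.inter_eq_right.mpr hsub,
    ← Finset.Ico_add_one_right_eq_Icc, Finset.sum_Ico_eq_sum_range]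
  have h2 : a + d + 1 - a = d + 1 := by omega
  rw [h2]
  have h3 : ∀ k ∈ Finset.range (d + 1),
      C (P.coeff (d + a - (a + k))) * X ^ (K - 1 - (a + k))
      = X ^ (K - 1 - (a + d)) * (C (P.coeff (d - k)) * X ^ (d - k)) := by
    intro k hk
    simp only [Finset.mem_range] at hk
    have e1 : d + a - (a + k) = d - k := by omega
    have e2 : K - 1 - (a + k) = K - 1 - (a + d) + (d - k) := by omega
    rw [e1, e2, pow_add]; ring
  rw [Finset.sum_congr rfl h3, ← Finset.mul_sum]
  congr 1
  have hr := Finset.sum_range_reflect (fun d' => C (P.coeff d') * X ^ d') (d + 1)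
  simp only [Nat.add_sub_cancel] at hr
  rw [hr]
  simp_rw [Polynomial.C_mul_X_pow_eq_monomial]
  exact (Polynomial.as_sum_range' P (d + 1) (by omega)).symm

variable {F G : Polynomial ℂ} {m n : ℕ}

lemma row_poly (hF : F.natDegree ≤ m) (hG : G.natDegree ≤ n) (i : Fin (n + m)) :
    ∑ j : Fin (n + m), C (sylvesterMatrix F G m n i j) * X ^ (n + m - 1 - (j : ℕ))
      = if (i : ℕ) < n then X ^ (n - 1 - (i : ℕ)) * F
        else X ^ (m - 1 - ((i : ℕ) - n)) * G := by
  have hiN : (i : ℕ) < n + m := i.isLt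
  by_cases hi : (i : ℕ) < n
  · rw [if_pos hi]
    have key := L0 (n + m) F m (i : ℕ) hF (by omega)
    have hconv : (∑ j : Fin (n + m), C (sylvesterMatrix F G m n i j) * X ^ (n + m - 1 - (j : ℕ)))
        = ∑ j ∈ Finset.range (n + m),
            if (i : ℕ) ≤ j ∧ j ≤ (i : ℕ) + m then C (F.coeff (m + (i : ℕ) - j)) * X ^ (n + m - 1 - j) else 0 := by
      rw [← Fin.sum_univ_eq_sum_range
        (fun j => if (i : ℕ) ≤ j ∧ j ≤ (i : ℕ) + m then C (F.coeff (m + (i : ℕ) - j)) * X ^ (n + m - 1 - j) else 0) (n + m)]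
      refine Finset.sum_congr rfl fun j _ => ?_
      simp only [sylvesterMatrix, Matrix.of_apply, if_pos hi]
      split_ifs with h
      · rfl
      · simp
    have he : n + m - 1 - ((i : ℕ) + m) = n - 1 - (i : ℕ) := by omega
    rw [hconv, key, he]
  · rw [if_neg hi]
    have key := L0 (n + m) G n ((i : ℕ) - n) hG (by omega)
    have hconv : (∑ j : Fin (n + m), C (sylvesterMatrix F G m n i j) * X ^ (n + m - 1 - (j : ℕ)))
        = ∑ j ∈ Finset.range (n + m),
            if (i : ℕ) - n ≤ j ∧ j ≤ ((i : ℕ) - n) + n then C (G.coeff (n + ((i : ℕ) - n) - j)) * X ^ (n + m - 1 - j) else 0 := by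
      rw [← Fin.sum_univ_eq_sum_range
        (fun j => if (i : ℕ) - n ≤ j ∧ j ≤ ((i : ℕ) - n) + n then C (G.coeff (n + ((i : ℕ) - n) - j)) * X ^ (n + m - 1 - j) else 0) (n + m)]
      refine Finset.sum_congr rfl fun j _ => ?_
      simp only [sylvesterMatrix, Matrix.of_apply, if_neg hi]
      split_ifs with h
      · rfl
      · simp
    have he : n + m - 1 - (((i : ℕ) - n) + n) = m - 1 - ((i : ℕ) - n) := by omega
    rw [hconv, key, he]

lemma mulVec_pow (hF : F.natDegree ≤ m) (hG : G.natDegree ≤ n) {y : ℂ}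
    (hFy : F.eval y = 0) (hGy : G.eval y = 0) :
    (sylvesterMatrix F G m n).mulVec (fun j => y ^ (n + m - 1 - (j : ℕ))) = 0 := by
  funext i
  have h2 := congrArg (eval y) (row_poly hF hG i)
  rw [Polynomial.eval_finset_sum] at h2
  simp only [eval_mul, eval_pow, eval_C, eval_X] at h2
  simp only [Matrix.mulVec, dotProduct, Pi.zero_apply]
  rw [h2]
  split_ifs <;> simp [hFy, hGy]

lemma vecMul_poly (hF : F.natDegree ≤ m) (hG : G.natDegree ≤ n) (w : Fin (n + m) → ℂ) :
    (∑ i : Fin (n + m), if (i : ℕ) < n then C (w i) * X ^ (n - 1 - (i : ℕ)) else 0) * F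
      + (∑ i : Fin (n + m), if (i : ℕ) < n then 0 else C (w i) * X ^ (m - 1 - ((i : ℕ) - n))) * G
    = ∑ j : Fin (n + m), C ((sylvesterMatrix F G m n).vecMul w j) * X ^ (n + m - 1 - (j : ℕ)) := by
  rw [Finset.sum_mul, Finset.sum_mul, ← Finset.sum_add_distrib]
  have h1 : ∀ i : Fin (n + m),
      (if (i : ℕ) < n then C (w i) * X ^ (n - 1 - (i : ℕ)) else 0) * F
        + (if (i : ℕ) < n then 0 else C (w i) * X ^ (m - 1 - ((i : ℕ) - n))) * G
      = C (w i) * ∑ j : Fin (n + m), C (sylvesterMatrix F G m n i j) * X ^ (n + m - 1 - (j : ℕ)) := by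
    intro i
    rw [row_poly hF hG i]
    split_ifs with h
    · rw [zero_mul, add_zero]; ring
    · rw [zero_mul, zero_add]; ring
  rw [Finset.sum_congr rfl (fun i _ => h1 i)]
  simp only [Finset.mul_sum]
  rw [Finset.sum_comm]
  refine Finset.sum_congr rfl fun j _ => ?_
  simp only [Matrix.vecMul, dotProduct]
  rw [map_sum, Finset.sum_mul]
  refine Finset.sum_congr rfl fun i _ => ?_
  rw [map_mul]; ring

end SylAux

namespace SylAux

variable {m n : ℕ}

lemma coeffA (w : Fin (n + m) → ℂ) (i₀ : Fin (n + m)) (h : (i₀ : ℕ) < n) :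
    (∑ i : Fin (n + m), if (i : ℕ) < n then C (w i) * X ^ (n - 1 - (i : ℕ)) else 0).coeff
      (n - 1 - (i₀ : ℕ)) = w i₀ := by
  rw [Polynomial.finset_sum_coeff, Finset.sum_eq_single i₀]
  · simp [if_pos h, coeff_C_mul, coeff_X_pow]
  · intro i _ hne
    by_cases hi : (i : ℕ) < n
    · simp only [if_pos hi, coeff_C_mul, coeff_X_pow, mul_ite, mul_one, mul_zero,
        ite_eq_right_iff]
      intro he; exact absurd (Fin.ext (show (i : ℕ) = (i₀ : ℕ) by omega)) hne
    · simp [if_neg hi]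
  · intro h'; exact absurd (Finset.mem_univ i₀) h'

lemma coeffB (w : Fin (n + m) → ℂ) (i₀ : Fin (n + m)) (h : ¬ (i₀ : ℕ) < n) :
    (∑ i : Fin (n + m), if (i : ℕ) < n then 0 else C (w i) * X ^ (m - 1 - ((i : ℕ) - n))).coeff
      (m - 1 - ((i₀ : ℕ) - n)) = w i₀ := by
  rw [Polynomial.finset_sum_coeff, Finset.sum_eq_single i₀]
  · simp [if_neg h, coeff_C_mul, coeff_X_pow]
  · intro i _ hne
    by_cases hi : (i : ℕ) < n
    · simp [if_pos hi]
    · have h1 := i.isLt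
      have h2 := i₀.isLt
      simp only [if_neg hi, coeff_C_mul, coeff_X_pow, mul_ite, mul_one, mul_zero,
        ite_eq_right_iff]
      intro he; exact absurd (Fin.ext (show (i : ℕ) = (i₀ : ℕ) by omega)) hne
  · intro h'; exact absurd (Finset.mem_univ i₀) h'

lemma degA (w : Fin (n + m) → ℂ) :
    (∑ i : Fin (n + m), if (i : ℕ) < n then C (w i) * X ^ (n - 1 - (i : ℕ)) else 0).natDegree
      ≤ n - 1 :=
  Polynomial.natDegree_sum_le_of_forall_le _ _ fun i _ => by
    split_ifs
    · exact (Polynomial.natDegree_C_mul_X_pow_le _ _).trans (by omega)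
    · simp

lemma degB (w : Fin (n + m) → ℂ) :
    (∑ i : Fin (n + m), if (i : ℕ) < n then 0 else C (w i) * X ^ (m - 1 - ((i : ℕ) - n))).natDegree
      ≤ m - 1 :=
  Polynomial.natDegree_sum_le_of_forall_le _ _ fun i _ => by
    split_ifs
    · simp
    · exact (Polynomial.natDegree_C_mul_X_pow_le _ _).trans (by omega)

lemma isCoprime_of_no_common_root {F G : Polynomial ℂ}
    (h : ¬ ∃ y : ℂ, F.eval y = 0 ∧ G.eval y = 0) : IsCoprime F G := by
  classical
  rw [← EuclideanDomain.gcd_isUnit_iff]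
  by_contra hu
  have hdeg : (EuclideanDomain.gcd F G).degree ≠ 0 := fun h0 =>
    hu (Polynomial.isUnit_iff_degree_eq_zero.mpr h0)
  obtain ⟨z, hz⟩ := IsAlgClosed.exists_root _ hdeg
  obtain ⟨q1, hq1⟩ := EuclideanDomain.gcd_dvd_left F G
  obtain ⟨q2, hq2⟩ := EuclideanDomain.gcd_dvd_right F G
  exact h ⟨z, by rw [hq1, eval_mul, hz, zero_mul], by rw [hq2, eval_mul, hz, zero_mul]⟩

lemma two_le_natDegree {P : Polynomial ℂ} (hP : P ≠ 0) {y1 y2 : ℂ} (h12 : y1 ≠ y2)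
    (h1 : P.eval y1 = 0) (h2 : P.eval y2 = 0) : 2 ≤ P.natDegree := by
  have m1 : y1 ∈ P.roots := by rw [Polynomial.mem_roots']; exact ⟨hP, h1⟩
  have m2 : y2 ∈ P.roots := by rw [Polynomial.mem_roots']; exact ⟨hP, h2⟩
  have hcard : ({y1, y2} : Finset ℂ).card = 2 := by
    rw [Finset.card_insert_of_notMem (by simp [h12]), Finset.card_singleton]
  calc 2 = ({y1, y2} : Finset ℂ).card := hcard.symm
    _ ≤ P.roots.toFinset.card := by
        apply Finset.card_le_card
        intro z hz
        simp only [Finset.mem_insert, Finset.mem_singleton] at hz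
        rw [Multiset.mem_toFinset]
        rcases hz with rfl | rfl
        · exact m1
        · exact m2
    _ ≤ Multiset.card P.roots := P.roots.toFinset_card_le
    _ ≤ P.natDegree := Polynomial.card_roots' P

lemma deriv_prod {ι : Type*} [DecidableEq ι] (s : Finset ι) (f : ι → Polynomial ℚ) :
    derivative (∏ i ∈ s, f i) = ∑ i ∈ s, (∏ j ∈ s.erase i, f j) * derivative (f i) := by
  rw [Finset.prod_eq_multiset_prod, Polynomial.derivative_prod, Finset.sum_eq_multiset_sum]
  refine congrArg Multiset.sum (Multiset.map_congr rfl fun i _ => ?_)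
  rw [Finset.prod_eq_multiset_prod, Finset.erase_val]

lemma derivative_det {k : ℕ} (M : Matrix (Fin k) (Fin k) (Polynomial ℚ)) :
    derivative M.det = ∑ i : Fin k, (M.updateCol i fun r => derivative (M r i)).det := by
  classical
  rw [Matrix.det_apply', map_sum]
  have step1 : ∀ σ : Equiv.Perm (Fin k),
      derivative (((Equiv.Perm.sign σ : ℤ) : Polynomial ℚ) * ∏ i, M (σ i) i)
        = ∑ i : Fin k, ((Equiv.Perm.sign σ : ℤ) : Polynomial ℚ)
            * ((∏ j ∈ Finset.univ.erase i, M (σ j) j) * derivative (M (σ i) i)) := by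
    intro σ
    rw [Polynomial.derivative_intCast_mul, deriv_prod, Finset.mul_sum]
  rw [Finset.sum_congr rfl fun σ _ => step1 σ, Finset.sum_comm]
  refine Finset.sum_congr rfl fun i _ => ?_
  rw [Matrix.det_apply']
  refine Finset.sum_congr rfl fun σ _ => ?_
  have hprod : (∏ j, (M.updateCol i fun r => derivative (M r i)) (σ j) j)
      = derivative (M (σ i) i) * ∏ j ∈ Finset.univ.erase i, M (σ j) j := by
    rw [← Finset.mul_prod_erase Finset.univ _ (Finset.mem_univ i)]
    congr 1
    · exact Matrix.updateCol_self
    · refine Finset.prod_congr rfl fun j hj => ?_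
      rw [Matrix.updateCol_apply, if_neg (Finset.ne_of_mem_erase hj)]
  rw [hprod]; ring

lemma det_updateCol_eq_zero {k : ℕ} (M : Matrix (Fin k) (Fin k) ℂ)
    (i : Fin k) (c : Fin k → ℂ) (w : Fin k → ℂ) (hwne : w ≠ 0) (hwi : w i = 0)
    (hker : M.mulVec w = 0) : (M.updateCol i c).det = 0 := by
  rw [← Matrix.exists_mulVec_eq_zero_iff]
  refine ⟨w, hwne, ?_⟩
  funext r
  have : ∀ j, (M.updateCol i c) r j * w j = M r j * w j := by
    intro j
    by_cases hj : j = i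
    · subst hj; rw [hwi, mul_zero, mul_zero]
    · rw [Matrix.updateCol_apply, if_neg hj]
  calc (M.updateCol i c).mulVec w r = ∑ j, (M.updateCol i c) r j * w j := rfl
    _ = ∑ j, M r j * w j := Finset.sum_congr rfl fun j _ => this j
    _ = M.mulVec w r := rfl
    _ = 0 := by rw [hker]; rfl

end SylAux

theorem stmt7 (f g : Polynomial (Polynomial ℚ))
    (hzero : {p : ℂ × ℂ |
      (specializeX p.1 f).eval p.2 = 0 ∧ (specializeX p.1 g).eval p.2 = 0}.Finite)
    (hcontent : (_root_.resultant f g).content = 1)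
    (hsf : Squarefree (_root_.resultant f g))
    (hlc : IsCoprime f.leadingCoeff g.leadingCoeff) :
    ∀ α : ℂ, aeval α (_root_.resultant f g) = 0 →
      ∃! y : ℂ, (specializeX α f).eval y = 0 ∧ (specializeX α g).eval y = 0 := by
  intro α hα
  classical
  set φ : Polynomial ℚ →+* ℂ := (Polynomial.aeval α).toRingHom with hφ
  set m := f.natDegree with hm
  set n := g.natDegree with hn
  set F : Polynomial ℂ := specializeX α f with hFdef
  set G : Polynomial ℂ := specializeX α g with hGdef
  have hFdeg : F.natDegree ≤ m := Polynomial.natDegree_map_le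
  have hGdeg : G.natDegree ≤ n := Polynomial.natDegree_map_le
  have hMap : (sylvesterMatrix f g m n).map φ = sylvesterMatrix F G m n := by
    ext i j
    simp only [sylvesterMatrix, Matrix.map_apply, Matrix.of_apply, hFdef, hGdef, specializeX,
      Polynomial.coeff_map, apply_ite φ, map_zero]
    rfl
  have hdet : (sylvesterMatrix F G m n).det = 0 := by
    rw [← hMap, ← RingHom.mapMatrix_apply, ← RingHom.map_det]
    exact hα
  have hlcφ : φ f.leadingCoeff ≠ 0 ∨ φ g.leadingCoeff ≠ 0 := by
    by_contra hc
    push_neg at hc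
    obtain ⟨a, b, hab⟩ := hlc
    have h1 := congrArg φ hab
    rw [map_add, map_mul, map_mul, hc.1, hc.2, mul_zero, mul_zero, add_zero, map_one] at h1
    exact zero_ne_one h1
  have hFcoeff : F.coeff m = φ f.leadingCoeff := by
    rw [hFdef, specializeX, Polynomial.coeff_map]; rfl
  have hGcoeff : G.coeff n = φ g.leadingCoeff := by
    rw [hGdef, specializeX, Polynomial.coeff_map]; rfl
  -- Existence of a common root
  have hex : ∃ y : ℂ, F.eval y = 0 ∧ G.eval y = 0 := by
    by_contra hno
    have hcop : IsCoprime F G := SylAux.isCoprime_of_no_common_root hno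
    have hdetT : (sylvesterMatrix F G m n).transpose.det = 0 := by
      rw [Matrix.det_transpose]; exact hdet
    obtain ⟨w, hwne, hwv⟩ := (Matrix.exists_mulVec_eq_zero_iff).mpr hdetT
    have hvm : (sylvesterMatrix F G m n).vecMul w = 0 := by
      rw [← Matrix.mulVec_transpose]; exact hwv
    set A := ∑ i : Fin (n + m), if (i : ℕ) < n then C (w i) * X ^ (n - 1 - (i : ℕ)) else 0
      with hA
    set B := ∑ i : Fin (n + m), if (i : ℕ) < n then 0 else C (w i) * X ^ (m - 1 - ((i : ℕ) - n))
      with hB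
    have hAB : A * F + B * G = 0 := by
      rw [hA, hB, SylAux.vecMul_poly hFdeg hGdeg w, hvm]
      simp
    have hkey : ∀ i : Fin (n + m), w i = 0 := by
      rcases hlcφ with hf | hg
      · have hFne : F ≠ 0 := fun h0 => hf (by rw [← hFcoeff, h0, Polynomial.coeff_zero])
        have hFdeg' : F.natDegree = m :=
          le_antisymm hFdeg (Polynomial.le_natDegree_of_ne_zero (by rw [hFcoeff]; exact hf))
        have hB0 : B = 0 := by
          by_cases hm0 : m = 0
          · rw [hB]
            apply Finset.sum_eq_zero
            intro i _
            rw [if_pos (by have := i.isLt; omega)]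
          · by_contra hBne
            have hdvd : F ∣ B := by
              refine hcop.dvd_of_dvd_mul_right ⟨-A, ?_⟩
              linear_combination hAB
            have hle := Polynomial.natDegree_le_of_dvd hdvd hBne
            have hdB := SylAux.degB w
            rw [← hB] at hdB
            omega
        have hA0 : A = 0 := by
          have h1 : A * F = 0 := by rw [hB0, zero_mul, add_zero] at hAB; exact hAB
          rcases mul_eq_zero.mp h1 with h | h
          · exact h
          · exact absurd h hFne
        intro i
        by_cases hi : (i : ℕ) < n
        · rw [← SylAux.coeffA w i hi, ← hA, hA0, Polynomial.coeff_zero]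
        · rw [← SylAux.coeffB w i hi, ← hB, hB0, Polynomial.coeff_zero]
      · have hGne : G ≠ 0 := fun h0 => hg (by rw [← hGcoeff, h0, Polynomial.coeff_zero])
        have hGdeg' : G.natDegree = n :=
          le_antisymm hGdeg (Polynomial.le_natDegree_of_ne_zero (by rw [hGcoeff]; exact hg))
        have hA0 : A = 0 := by
          by_cases hn0 : n = 0
          · rw [hA]
            apply Finset.sum_eq_zero
            intro i _
            rw [if_neg (by omega)]
          · by_contra hAne
            have hdvd : G ∣ A := by
              refine hcop.symm.dvd_of_dvd_mul_right ⟨-B, ?_⟩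
              linear_combination hAB
            have hle := Polynomial.natDegree_le_of_dvd hdvd hAne
            have hdA := SylAux.degA w
            rw [← hA] at hdA
            omega
        have hB0 : B = 0 := by
          have h1 : B * G = 0 := by rw [hA0, zero_mul, zero_add] at hAB; exact hAB
          rcases mul_eq_zero.mp h1 with h | h
          · exact h
          · exact absurd h hGne
        intro i
        by_cases hi : (i : ℕ) < n
        · rw [← SylAux.coeffA w i hi, ← hA, hA0, Polynomial.coeff_zero]
        · rw [← SylAux.coeffB w i hi, ← hB, hB0, Polynomial.coeff_zero]
    exact hwne (funext hkey)
  -- Uniqueness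
  obtain ⟨y0, hy0⟩ := hex
  refine ⟨y0, hy0, ?_⟩
  intro y1 hy1
  by_contra hne
  have h2le : 2 ≤ n + m := by
    rcases hlcφ with hf | hg
    · have hFne : F ≠ 0 := fun h0 => hf (by rw [← hFcoeff, h0, Polynomial.coeff_zero])
      have hFdeg' : F.natDegree = m :=
        le_antisymm hFdeg (Polynomial.le_natDegree_of_ne_zero (by rw [hFcoeff]; exact hf))
      have := SylAux.two_le_natDegree hFne hne hy1.1 hy0.1
      omega
    · have hGne : G ≠ 0 := fun h0 => hg (by rw [← hGcoeff, h0, Polynomial.coeff_zero])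
      have hGdeg' : G.natDegree = n :=
        le_antisymm hGdeg (Polynomial.le_natDegree_of_ne_zero (by rw [hGcoeff]; exact hg))
      have := SylAux.two_le_natDegree hGne hne hy1.2 hy0.2
      omega
  have hv1 : (sylvesterMatrix F G m n).mulVec (fun j => y1 ^ (n + m - 1 - (j : ℕ))) = 0 :=
    SylAux.mulVec_pow hFdeg hGdeg hy1.1 hy1.2
  have hv0 : (sylvesterMatrix F G m n).mulVec (fun j => y0 ^ (n + m - 1 - (j : ℕ))) = 0 :=
    SylAux.mulVec_pow hFdeg hGdeg hy0.1 hy0.2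
  have hcol : ∀ (i : Fin (n + m)) (c : Fin (n + m) → ℂ),
      ((sylvesterMatrix F G m n).updateCol i c).det = 0 := by
    intro i c
    by_cases h1 : y1 ^ (n + m - 1 - (i : ℕ)) = 0
    · refine SylAux.det_updateCol_eq_zero _ i c _ ?_ h1 hv1
      intro hzero
      have h : y1 ^ (n + m - 1 - (n + m - 1)) = 0 :=
        congrFun hzero (⟨n + m - 1, by omega⟩ : Fin (n + m))
      rw [Nat.sub_self, pow_zero] at h
      exact one_ne_zero h
    · refine SylAux.det_updateCol_eq_zero _ i c
        ((y1 ^ (n + m - 1 - (i : ℕ))) • (fun j : Fin (n + m) => y0 ^ (n + m - 1 - (j : ℕ)))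
          - (y0 ^ (n + m - 1 - (i : ℕ))) • (fun j : Fin (n + m) => y1 ^ (n + m - 1 - (j : ℕ))))
        ?_ ?_ ?_
      · intro hzero
        have e1 : y1 ^ (n + m - 1 - (i : ℕ)) * y0 ^ (n + m - 1 - (n + m - 1))
            - y0 ^ (n + m - 1 - (i : ℕ)) * y1 ^ (n + m - 1 - (n + m - 1)) = 0 :=
          congrFun hzero (⟨n + m - 1, by omega⟩ : Fin (n + m))
        have e2 : y1 ^ (n + m - 1 - (i : ℕ)) * y0 ^ (n + m - 1 - (n + m - 2))
            - y0 ^ (n + m - 1 - (i : ℕ)) * y1 ^ (n + m - 1 - (n + m - 2)) = 0 :=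
          congrFun hzero (⟨n + m - 2, by omega⟩ : Fin (n + m))
        simp only [Nat.sub_self, pow_zero, mul_one] at e1
        rw [show n + m - 1 - (n + m - 2) = 1 by omega] at e2
        simp only [pow_one] at e2
        have hc0 : y1 ^ (n + m - 1 - (i : ℕ)) * (y0 - y1) = 0 := by
          linear_combination e2 - y1 * e1
        rcases mul_eq_zero.mp hc0 with h | h
        · exact h1 h
        · exact hne (sub_eq_zero.mp h).symm
      · simp only [Pi.sub_apply, Pi.smul_apply, smul_eq_mul]
        ring
      · rw [Matrix.mulVec_sub, Matrix.mulVec_smul, Matrix.mulVec_smul, hv0, hv1,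
          smul_zero, smul_zero, sub_zero]
  have hsep : (_root_.resultant f g).Separable := PerfectField.separable_iff_squarefree.mpr hsf
  obtain ⟨a, b, hab⟩ := hsep
  have hd0 : φ (derivative (_root_.resultant f g)) = 0 := by
    have hres : _root_.resultant f g = (sylvesterMatrix f g m n).det := rfl
    rw [hres, SylAux.derivative_det, map_sum]
    refine Finset.sum_eq_zero fun i _ => ?_
    rw [RingHom.map_det, RingHom.mapMatrix_apply, Matrix.map_updateCol, hMap]
    exact hcol i _
  have hR0 : φ (_root_.resultant f g) = 0 := hα
  have hcontra := congrArg φ hab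
  rw [map_add, map_mul, map_mul, hd0, hR0, mul_zero, mul_zero, add_zero, map_one] at hcontra
  exact zero_ne_one hcontra
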